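/- Let j ≥ 1 and k ≥ 0 be integers, and let a_k^{(n)} (k, n ≥ 0) be complex numbers. Suppose that for each k' ∈ {k, k+1, …, k+j−1} there are nonzero complex numbers r_{1,k'}, …, r_{j,k'} with |r_{1,k'}| > |r_{2,k'}| > … > |r_{j,k'}|, nonzero complex constants c_{1,k'}, …, c_{j,k'}, reals ρ_{k'} with 0 < ρ_{k'} < |r_{j,k'}| and μ_{k'} > 0, and a sequence (b_{k'}^{(n)})_{n≥0} with |b_{k'}^{(n)}| ≤ μ_{k'} ρ_{k'}^n, such that a_{k'}^{(n)} = Σ_{ℓ=1}^{j} c_{ℓ,k'} r_{ℓ,k'}^{n+k'+1} + b_{k'}^{(n)} for all n ≥ 0. For each tuple κ = (κ_1, …, κ_j) ∈ {1, …, j}^j define the constant c_κ as the determinant of the j×j matrix whose (s, ℓ) entry, for s = 0, …, j−1 and ℓ = 1, …, j, is c_{κ_ℓ, k+ℓ−1} r_{κ_ℓ, k+ℓ−1}^{k+ℓ+s}. Then there exists a constant K > 0 such that for all n ≥ 0, |C_{k,j}^{(n)} − Σ_{κ ∈ {1,…,j}^j} c_κ (Π_{ℓ=1}^{j} r_{κ_ℓ,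 k+ℓ−1})^n| ≤ K Σ_{ℓ=1}^{j} (ρ_{k+ℓ−1} Π_{m=1, m≠ℓ}^{j} |r_{1, k+m−1}|)^n. -/

import Mathlib

open Matrix Finset

lemma norm_det_le_of_row_bound {j : ℕ} (M : Matrix (Fin j) (Fin j) ℂ) (B : Fin j → ℝ)
    (h : ∀ i s, ‖M i s‖ ≤ B i) :
    ‖M.det‖ ≤ (Nat.factorial j) * ∏ i, B i := by
  rw [Matrix.det_apply]
  calc ‖∑ σ : Equiv.Perm (Fin j), Equiv.Perm.sign σ • ∏ i, M (σ i) i‖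
      ≤ ∑ σ : Equiv.Perm (Fin j), ‖Equiv.Perm.sign σ • ∏ i, M (σ i) i‖ := norm_sum_le _ _
    _ ≤ ∑ _σ : Equiv.Perm (Fin j), ∏ i, B i := by
        refine Finset.sum_le_sum fun σ _ => ?_
        have h1 : ‖Equiv.Perm.sign σ • ∏ i, M (σ i) i‖ = ‖∏ i, M (σ i) i‖ := by
          rcases Int.units_eq_one_or (Equiv.Perm.sign σ) with hs | hs <;> simp [hs]
        rw [h1]
        calc ‖∏ i, M (σ i) i‖ = ∏ i, ‖M (σ i) i‖ := by rw [norm_prod]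
          _ ≤ ∏ i, B (σ i) :=
              Finset.prod_le_prod (fun i _ => norm_nonneg _) (fun i _ => h _ _)
          _ = ∏ i, B i := Equiv.prod_comp σ B
    _ = (Nat.factorial j) * ∏ i, B i := by
        rw [Finset.sum_const, Finset.card_univ, Fintype.card_perm, nsmul_eq_mul]
        simp

/-- The Casorati determinant: `C_{k,0}^{(n)} = 1` and for `j ≥ 1`,
`C_{k,j}^{(n)} = det (a_{k+ℓ}^{(n+s)})_{s,ℓ = 0,…,j-1}`. -/
noncomputable def casorati (a : ℕ → ℕ → ℂ) (k j n : ℕ) : ℂ :=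
  Matrix.det (Matrix.of fun s ℓ : Fin j => a (k + (ℓ : ℕ)) (n + (s : ℕ)))

/- STATEMENT 1: general asymptotic expansion of the Casorati determinant. -/

theorem casorati_asymptotic_general
    (j k : ℕ) (hj : 1 ≤ j)
    (a b : ℕ → ℕ → ℂ)
    (r c : ℕ → Fin j → ℂ) (ρ μ : ℕ → ℝ)
    (hr0 : ∀ d < j, ∀ ℓ, r (k + d) ℓ ≠ 0)
    (hrdec : ∀ d < j, ∀ ℓ₁ ℓ₂ : Fin j, ℓ₁ < ℓ₂ → ‖r (k + d) ℓ₂‖ < ‖r (k + d) ℓ₁‖)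
    (hc : ∀ d < j, ∀ ℓ, c (k + d) ℓ ≠ 0)
    (hρpos : ∀ d < j, 0 < ρ (k + d))
    (hρlt : ∀ d < j, ρ (k + d) < ‖r (k + d) ⟨j - 1, by omega⟩‖)
    (hμ : ∀ d < j, 0 < μ (k + d))
    (hb : ∀ d < j, ∀ n : ℕ, ‖b (k + d) n‖ ≤ μ (k + d) * ρ (k + d) ^ n)
    (ha : ∀ d < j, ∀ n : ℕ,
      a (k + d) n = (∑ ℓ, c (k + d) ℓ * r (k + d) ℓ ^ (n + (k + d) + 1)) + b (k + d) n) :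
    ∃ K > 0, ∀ n : ℕ,
      ‖casorati a k j n -
        ∑ κ : Fin j → Fin j,
          Matrix.det (Matrix.of fun s ℓ : Fin j =>
            c (k + (ℓ : ℕ)) (κ ℓ) * r (k + (ℓ : ℕ)) (κ ℓ) ^ (k + (ℓ : ℕ) + 1 + (s : ℕ))) *
          (∏ ℓ : Fin j, r (k + (ℓ : ℕ)) (κ ℓ)) ^ n‖ ≤
      K * ∑ ℓ : Fin j,
        (ρ (k + (ℓ : ℕ)) *
          ∏ m ∈ Finset.univ.erase ℓ, ‖r (k + (m : ℕ)) ⟨0, by omega⟩‖) ^ n := by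
  classical
  -- basic notation
  set R : Fin j → ℝ := fun m => ‖r (k + (m : ℕ)) ⟨0, by omega⟩‖ with hRdef
  have hRpos : ∀ m : Fin j, 0 < R m := fun m =>
    norm_pos_iff.mpr (hr0 m m.2 _)
  have hrleR : ∀ (m : Fin j) (t : Fin j), ‖r (k + (m : ℕ)) t‖ ≤ R m := by
    intro m t
    rcases Nat.eq_zero_or_pos t.val with h0 | h0
    · have : t = ⟨0, by omega⟩ := Fin.ext h0
      rw [this]
    · exact le_of_lt (hrdec m m.2 ⟨0, by omega⟩ t (by simp [Fin.lt_def, h0]))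
  have hρleR : ∀ m : Fin j, ρ (k + (m : ℕ)) ≤ R m := fun m =>
    le_of_lt (lt_of_lt_of_le (hρlt m m.2) (hrleR m ⟨j - 1, by omega⟩))
  -- the decomposition of the rows
  set g : ℕ → Fin j → Option (Fin j) → Fin j → ℂ := fun n ℓ t s =>
    t.elim (b (k + (ℓ : ℕ)) (n + s))
      (fun t => c (k + (ℓ : ℕ)) t * r (k + (ℓ : ℕ)) t ^ ((n + (s : ℕ)) + (k + (ℓ : ℕ)) + 1))
    with hgdef
  set rate : (Fin j → Option (Fin j)) → Fin j → ℝ := fun κ ℓ =>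
    (κ ℓ).elim (ρ (k + (ℓ : ℕ))) (fun _ => R ℓ) with hratedef
  set D : (Fin j → Option (Fin j)) → Fin j → ℝ := fun κ ℓ =>
    (κ ℓ).elim (μ (k + (ℓ : ℕ)) * (max 1 (ρ (k + (ℓ : ℕ)))) ^ j)
      (fun t => ‖c (k + (ℓ : ℕ)) t‖ * (max 1 (R ℓ)) ^ (k + 2 * j)) with hDdef
  have hDnonneg : ∀ κ ℓ, 0 ≤ D κ ℓ := by
    intro κ ℓ
    cases hκ : κ ℓ with
    | none =>
        simp only [hDdef, hκ, Option.elim]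
        exact mul_nonneg (le_of_lt (hμ ℓ ℓ.2)) (by positivity)
    | some t =>
        simp only [hDdef, hκ, Option.elim]
        positivity
  have hratenonneg : ∀ κ ℓ, 0 ≤ rate κ ℓ := by
    intro κ ℓ
    cases hκ : κ ℓ with
    | none => simp only [hratedef, hκ, Option.elim]; exact le_of_lt (hρpos ℓ ℓ.2)
    | some t => simp only [hratedef, hκ, Option.elim]; exact le_of_lt (hRpos ℓ)
  have hrateleR : ∀ κ (ℓ : Fin j), rate κ ℓ ≤ R ℓ := by
    intro κ ℓ
    cases hκ : κ ℓ with
    | none => simp only [hratedef, hκ, Option.elim]; exact hρleR ℓ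
    | some t => simp only [hratedef, hκ, Option.elim]; exact le_rfl
  -- row bounds
  have hrow : ∀ (κ : Fin j → Option (Fin j)) (n : ℕ) (ℓ s : Fin j),
      ‖g n ℓ (κ ℓ) s‖ ≤ D κ ℓ * rate κ ℓ ^ n := by
    intro κ n ℓ s
    cases hκ : κ ℓ with
    | none =>
        simp only [hgdef, hDdef, hratedef, hκ, Option.elim]
        calc ‖b (k + (ℓ : ℕ)) (n + s)‖ ≤ μ (k + (ℓ : ℕ)) * ρ (k + (ℓ : ℕ)) ^ (n + (s : ℕ)) :=
              hb ℓ ℓ.2 _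
          _ = μ (k + (ℓ : ℕ)) * ρ (k + (ℓ : ℕ)) ^ (s : ℕ) * ρ (k + (ℓ : ℕ)) ^ n := by
              rw [pow_add]; ring
          _ ≤ μ (k + (ℓ : ℕ)) * (max 1 (ρ (k + (ℓ : ℕ)))) ^ j * ρ (k + (ℓ : ℕ)) ^ n := by
              have h1 : ρ (k + (ℓ : ℕ)) ^ (s : ℕ) ≤ (max 1 (ρ (k + (ℓ : ℕ)))) ^ j := by
                calc ρ (k + (ℓ : ℕ)) ^ (s : ℕ) ≤ (max 1 (ρ (k + (ℓ : ℕ)))) ^ (s : ℕ) :=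
                      pow_le_pow_left₀ (le_of_lt (hρpos ℓ ℓ.2)) (le_max_right _ _) _
                  _ ≤ (max 1 (ρ (k + (ℓ : ℕ)))) ^ j :=
                      pow_le_pow_right₀ (le_max_left _ _) (le_of_lt s.2)
              have h2 : (0:ℝ) ≤ ρ (k + (ℓ : ℕ)) ^ n := pow_nonneg (le_of_lt (hρpos ℓ ℓ.2)) n
              have h3 : (0:ℝ) < μ (k + (ℓ : ℕ)) := hμ ℓ ℓ.2
              nlinarith [mul_le_mul_of_nonneg_left h1 (le_of_lt h3)]
    | some t =>
        simp only [hgdef, hDdef, hratedef, hκ, Option.elim]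
        rw [norm_mul, norm_pow]
        have he : (n + (s : ℕ)) + (k + (ℓ : ℕ)) + 1 = n + ((s:ℕ) + (k + (ℓ : ℕ)) + 1) := by omega
        rw [he, pow_add]
        have h1 : ‖r (k + (ℓ : ℕ)) t‖ ^ n ≤ R ℓ ^ n :=
          pow_le_pow_left₀ (norm_nonneg _) (hrleR ℓ t) n
        have h2 : ‖r (k + (ℓ : ℕ)) t‖ ^ ((s:ℕ) + (k + (ℓ : ℕ)) + 1) ≤ (max 1 (R ℓ)) ^ (k + 2 * j) := by
          calc ‖r (k + (ℓ : ℕ)) t‖ ^ ((s:ℕ) + (k + (ℓ : ℕ)) + 1)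
              ≤ (max 1 (R ℓ)) ^ ((s:ℕ) + (k + (ℓ : ℕ)) + 1) :=
                pow_le_pow_left₀ (norm_nonneg _) (le_trans (hrleR ℓ t) (le_max_right _ _)) _
            _ ≤ (max 1 (R ℓ)) ^ (k + 2 * j) := by
                refine pow_le_pow_right₀ (le_max_left _ _) ?_
                have := s.2; have := ℓ.2; omega
        calc ‖c (k + (ℓ : ℕ)) t‖ * (‖r (k + (ℓ : ℕ)) t‖ ^ n * ‖r (k + (ℓ : ℕ)) t‖ ^ ((s:ℕ) + (k + (ℓ : ℕ)) + 1))
            ≤ ‖c (k + (ℓ : ℕ)) t‖ * (R ℓ ^ n * (max 1 (R ℓ)) ^ (k + 2 * j)) := by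
              have hRn : (0:ℝ) ≤ R ℓ ^ n := pow_nonneg (le_of_lt (hRpos ℓ)) n
              refine mul_le_mul_of_nonneg_left ?_ (norm_nonneg _)
              exact mul_le_mul h1 h2 (pow_nonneg (norm_nonneg _) _) hRn
          _ = ‖c (k + (ℓ : ℕ)) t‖ * (max 1 (R ℓ)) ^ (k + 2 * j) * R ℓ ^ n := by ring
  -- key determinant expansion
  have key : ∀ n : ℕ, casorati a k j n =
      ∑ κ : Fin j → Option (Fin j),
        Matrix.det (Matrix.of fun ℓ s : Fin j => g n ℓ (κ ℓ) s) := by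
    intro n
    rw [casorati, ← Matrix.det_transpose]
    have hM : (Matrix.of fun s ℓ : Fin j => a (k + (ℓ : ℕ)) (n + (s : ℕ)))ᵀ
        = Matrix.of (fun ℓ s : Fin j => ∑ t : Option (Fin j), g n ℓ t s) := by
      ext ℓ s
      simp only [Matrix.transpose_apply, Matrix.of_apply]
      rw [ha ℓ ℓ.2 (n + s), Fintype.sum_option]
      simp only [hgdef, Option.elim]
      ring
    have e1 : (Matrix.of fun ℓ s : Fin j => ∑ t : Option (Fin j), g n ℓ t s)
        = Matrix.of (fun ℓ => ∑ t : Option (Fin j), g n ℓ t) := by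
      ext ℓ s
      simp [Finset.sum_apply]
    rw [hM, e1]
    have hms := MultilinearMap.map_sum
      (f := (Matrix.detRowAlternating : (Fin j → ℂ) [⋀^Fin j]→ₗ[ℂ] ℂ).toMultilinearMap)
      (g := fun ℓ t => g n ℓ t)
    exact hms
  -- split into good and bad parts
  set P : (Fin j → Option (Fin j)) → Prop := fun κ => ∀ ℓ, (κ ℓ).isSome with hPdef
  have split : ∀ n : ℕ,
      (∑ κ : Fin j → Option (Fin j), Matrix.det (Matrix.of fun ℓ s : Fin j => g n ℓ (κ ℓ) s))
      = (∑ κ : Fin j → Fin j,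
          Matrix.det (Matrix.of fun s ℓ : Fin j =>
            c (k + (ℓ : ℕ)) (κ ℓ) * r (k + (ℓ : ℕ)) (κ ℓ) ^ (k + (ℓ : ℕ) + 1 + (s : ℕ))) *
          (∏ ℓ : Fin j, r (k + (ℓ : ℕ)) (κ ℓ)) ^ n)
        + ∑ κ ∈ univ.filter (fun κ => ¬ P κ),
            Matrix.det (Matrix.of fun ℓ s : Fin j => g n ℓ (κ ℓ) s) := by
    intro n
    rw [← Finset.sum_filter_add_sum_filter_not univ P]
    congr 1
    refine Finset.sum_nbij' (i := fun κ ℓ => (κ ℓ).getD ⟨0, by omega⟩)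
      (j := fun κ' ℓ => some (κ' ℓ)) ?_ ?_ ?_ ?_ ?_
    · intro κ _; exact mem_univ _
    · intro κ' _
      simp [hPdef]
    · intro κ hκ
      simp only [mem_filter, hPdef] at hκ
      funext ℓ
      obtain ⟨t, ht⟩ := Option.isSome_iff_exists.mp (hκ.2 ℓ)
      simp [ht]
    · intro κ' _
      funext ℓ
      simp
    · intro κ hκ
      simp only [mem_filter, hPdef] at hκ
      have hrow' : (fun ℓ s : Fin j => g n ℓ (κ ℓ) s)
          = fun ℓ s : Fin j =>
            r (k + (ℓ : ℕ)) ((κ ℓ).getD ⟨0, by omega⟩) ^ n *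
              (c (k + (ℓ : ℕ)) ((κ ℓ).getD ⟨0, by omega⟩) *
               r (k + (ℓ : ℕ)) ((κ ℓ).getD ⟨0, by omega⟩) ^ (k + (ℓ : ℕ) + 1 + (s : ℕ))) := by
        funext ℓ s
        obtain ⟨t, ht⟩ := Option.isSome_iff_exists.mp (hκ.2 ℓ)
        simp only [hgdef, ht, Option.elim, Option.getD_some]
        have he : (n + (s : ℕ)) + (k + (ℓ : ℕ)) + 1 = n + (k + (ℓ : ℕ) + 1 + (s : ℕ)) := by omega
        rw [he, pow_add]
        ring
      calc Matrix.det (Matrix.of fun ℓ s : Fin j => g n ℓ (κ ℓ) s)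
          = (∏ ℓ : Fin j, r (k + (ℓ : ℕ)) ((κ ℓ).getD ⟨0, by omega⟩) ^ n) *
            Matrix.det (Matrix.of fun ℓ s : Fin j =>
              c (k + (ℓ : ℕ)) ((κ ℓ).getD ⟨0, by omega⟩) *
              r (k + (ℓ : ℕ)) ((κ ℓ).getD ⟨0, by omega⟩) ^ (k + (ℓ : ℕ) + 1 + (s : ℕ))) := by
            rw [hrow']
            exact Matrix.det_mul_column _ _
        _ = Matrix.det (Matrix.of fun s ℓ : Fin j =>
              c (k + (ℓ : ℕ)) ((κ ℓ).getD ⟨0, by omega⟩) *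
              r (k + (ℓ : ℕ)) ((κ ℓ).getD ⟨0, by omega⟩) ^ (k + (ℓ : ℕ) + 1 + (s : ℕ))) *
            (∏ ℓ : Fin j, r (k + (ℓ : ℕ)) ((κ ℓ).getD ⟨0, by omega⟩)) ^ n := by
            rw [← Finset.prod_pow]
            rw [show (Matrix.of fun ℓ s : Fin j =>
              c (k + (ℓ : ℕ)) ((κ ℓ).getD ⟨0, by omega⟩) *
              r (k + (ℓ : ℕ)) ((κ ℓ).getD ⟨0, by omega⟩) ^ (k + (ℓ : ℕ) + 1 + (s : ℕ)))
              = (Matrix.of fun s ℓ : Fin j =>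
              c (k + (ℓ : ℕ)) ((κ ℓ).getD ⟨0, by omega⟩) *
              r (k + (ℓ : ℕ)) ((κ ℓ).getD ⟨0, by omega⟩) ^ (k + (ℓ : ℕ) + 1 + (s : ℕ)))ᵀ from rfl]
            rw [Matrix.det_transpose]
            ring
  -- nonnegativity of the target terms
  have hTterm : ∀ (n : ℕ) (ℓ : Fin j),
      (0:ℝ) ≤ (ρ (k + (ℓ : ℕ)) * ∏ m ∈ univ.erase ℓ, R m) ^ n := by
    intro n ℓ
    apply pow_nonneg
    exact mul_nonneg (le_of_lt (hρpos ℓ ℓ.2)) (Finset.prod_nonneg fun m _ => le_of_lt (hRpos m))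
  have hTge : ∀ (n : ℕ) (ℓ0 : Fin j),
      (ρ (k + (ℓ0 : ℕ)) * ∏ m ∈ univ.erase ℓ0, R m) ^ n
        ≤ ∑ ℓ : Fin j, (ρ (k + (ℓ : ℕ)) * ∏ m ∈ univ.erase ℓ, R m) ^ n := fun n ℓ0 =>
    Finset.single_le_sum (fun ℓ _ => hTterm n ℓ) (mem_univ ℓ0)
  have hTnonneg : ∀ n : ℕ,
      (0:ℝ) ≤ ∑ ℓ : Fin j, (ρ (k + (ℓ : ℕ)) * ∏ m ∈ univ.erase ℓ, R m) ^ n := fun n =>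
    Finset.sum_nonneg fun ℓ _ => hTterm n ℓ
  -- bound on each bad term
  have hKnonneg : ∀ κ : Fin j → Option (Fin j),
      (0:ℝ) ≤ (j.factorial : ℝ) * ∏ ℓ, D κ ℓ := fun κ =>
    mul_nonneg (Nat.cast_nonneg _) (Finset.prod_nonneg fun ℓ _ => hDnonneg κ ℓ)
  have badbound : ∀ κ ∈ univ.filter (fun κ => ¬ P κ), ∀ n : ℕ,
      ‖Matrix.det (Matrix.of fun ℓ s : Fin j => g n ℓ (κ ℓ) s)‖
        ≤ ((j.factorial : ℝ) * ∏ ℓ, D κ ℓ) *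
            ∑ ℓ : Fin j, (ρ (k + (ℓ : ℕ)) * ∏ m ∈ univ.erase ℓ, R m) ^ n := by
    intro κ hκ n
    simp only [mem_filter, hPdef] at hκ
    obtain ⟨ℓ0, hℓ0⟩ : ∃ ℓ, κ ℓ = none := by
      by_contra h
      push_neg at h
      exact hκ.2 fun ℓ => Option.ne_none_iff_isSome.mp (h ℓ)
    have h1 : ‖Matrix.det (Matrix.of fun ℓ s : Fin j => g n ℓ (κ ℓ) s)‖
        ≤ (j.factorial : ℝ) * ∏ ℓ, (D κ ℓ * rate κ ℓ ^ n) :=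
      norm_det_le_of_row_bound _ _ (fun i s => hrow κ n i s)
    have h3 : ∏ ℓ, rate κ ℓ ^ n ≤ (ρ (k + (ℓ0 : ℕ)) * ∏ m ∈ univ.erase ℓ0, R m) ^ n := by
      rw [Finset.prod_pow]
      apply pow_le_pow_left₀ (Finset.prod_nonneg fun ℓ _ => hratenonneg κ ℓ)
      rw [← Finset.mul_prod_erase univ _ (mem_univ ℓ0)]
      have hr0' : rate κ ℓ0 = ρ (k + (ℓ0 : ℕ)) := by simp [hratedef, hℓ0]
      rw [hr0']
      exact mul_le_mul_of_nonneg_left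
        (Finset.prod_le_prod (fun m _ => hratenonneg κ m) (fun m _ => hrateleR κ m))
        (le_of_lt (hρpos ℓ0 ℓ0.2))
    calc ‖Matrix.det (Matrix.of fun ℓ s : Fin j => g n ℓ (κ ℓ) s)‖
        ≤ (j.factorial : ℝ) * ∏ ℓ, (D κ ℓ * rate κ ℓ ^ n) := h1
      _ = ((j.factorial : ℝ) * ∏ ℓ, D κ ℓ) * ∏ ℓ, rate κ ℓ ^ n := by
          rw [Finset.prod_mul_distrib]; ring
      _ ≤ ((j.factorial : ℝ) * ∏ ℓ, D κ ℓ) * (ρ (k + (ℓ0 : ℕ)) * ∏ m ∈ univ.erase ℓ0, R m) ^ n :=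
          mul_le_mul_of_nonneg_left h3 (hKnonneg κ)
      _ ≤ ((j.factorial : ℝ) * ∏ ℓ, D κ ℓ) *
            ∑ ℓ : Fin j, (ρ (k + (ℓ : ℕ)) * ∏ m ∈ univ.erase ℓ, R m) ^ n :=
          mul_le_mul_of_nonneg_left (hTge n ℓ0) (hKnonneg κ)
  -- conclusion
  set K : ℝ := 1 + ∑ κ ∈ univ.filter (fun κ => ¬ P κ), (j.factorial : ℝ) * ∏ ℓ, D κ ℓ with hKdef
  have hKsum : (0:ℝ) ≤ ∑ κ ∈ univ.filter (fun κ => ¬ P κ), (j.factorial : ℝ) * ∏ ℓ, D κ ℓ :=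
    Finset.sum_nonneg fun κ _ => hKnonneg κ
  have hKpos : 0 < K := by rw [hKdef]; linarith
  refine ⟨K, hKpos, fun n => ?_⟩
  show _ ≤ K * ∑ ℓ : Fin j, (ρ (k + (ℓ : ℕ)) * ∏ m ∈ univ.erase ℓ, R m) ^ n
  rw [key n, split n, add_sub_cancel_left]
  calc ‖∑ κ ∈ univ.filter (fun κ => ¬ P κ),
        Matrix.det (Matrix.of fun ℓ s : Fin j => g n ℓ (κ ℓ) s)‖
      ≤ ∑ κ ∈ univ.filter (fun κ => ¬ P κ),
          ‖Matrix.det (Matrix.of fun ℓ s : Fin j => g n ℓ (κ ℓ) s)‖ := norm_sum_le _ _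
    _ ≤ ∑ κ ∈ univ.filter (fun κ => ¬ P κ),
          ((j.factorial : ℝ) * ∏ ℓ, D κ ℓ) *
            ∑ ℓ : Fin j, (ρ (k + (ℓ : ℕ)) * ∏ m ∈ univ.erase ℓ, R m) ^ n :=
        Finset.sum_le_sum fun κ hκ => badbound κ hκ n
    _ = (∑ κ ∈ univ.filter (fun κ => ¬ P κ), (j.factorial : ℝ) * ∏ ℓ, D κ ℓ) *
          ∑ ℓ : Fin j, (ρ (k + (ℓ : ℕ)) * ∏ m ∈ univ.erase ℓ, R m) ^ n := by
        rw [Finset.sum_mul]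
    _ ≤ K * ∑ ℓ : Fin j, (ρ (k + (ℓ : ℕ)) * ∏ m ∈ univ.erase ℓ, R m) ^ n := by
        apply mul_le_mul_of_nonneg_right _ (hTnonneg n)
        rw [hKdef]; linarith
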